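/- Let X be a finite topological T₀-space and let S_F(X) denote the number of distinct semiflows on X. Then X has no down beat points if and only if S_F(X) = 1 (i.e., the trivial semiflow is the unique semiflow on X). -/

import Mathlib

open NNReal

/-- A semiflow on a topological space `X`: a jointly continuous map
`φ : ℝ≥0 × X → X` with `φ 0 x = x` and `φ s (φ t x) = φ (s + t) x`. -/
def IsSemiflow {X : Type*} [TopologicalSpace X] (φ : ℝ≥0 → X → X) : Prop :=
  Continuous (fun p : ℝ≥0 × X => φ p.1 p.2) ∧
  (∀ x : X, φ 0 x = x) ∧
  ∀ (s t : ℝ≥0) (x : X), φ s (φ t x) = φ (s + t) x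

/-- A semiflow is trivial if every time-`t` map is the identity. -/
def IsTrivialSemiflow {X : Type*} [TopologicalSpace X] (φ : ℝ≥0 → X → X) : Prop :=
  ∀ (t : ℝ≥0) (x : X), φ t x = x

/-- `x` is a down beat point: `U_x \ {x}` has a greatest element in the
specialization order (`y ⤳ x` means `y ≤ x`, i.e. `y ∈ U_x`). -/
def IsDownBeatPoint {X : Type*} [TopologicalSpace X] (x : X) : Prop :=
  ∃ m : X, (m ⤳ x ∧ m ≠ x) ∧ ∀ y : X, y ⤳ x → y ≠ x → y ⤳ m

/-- `x` is an up beat point: `F_x \ {x}` has a least element in the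
specialization order. -/
def IsUpBeatPoint {X : Type*} [TopologicalSpace X] (x : X) : Prop :=
  ∃ m : X, (x ⤳ m ∧ m ≠ x) ∧ ∀ y : X, x ⤳ y → y ≠ x → m ⤳ y

section Aux

open Set Filter Topology

variable {X : Type*} [TopologicalSpace X] [Finite X]

lemma semiflow_eps {φ : ℝ≥0 → X → X} (h : IsSemiflow φ) :
    ∃ ε : ℝ≥0, 0 < ε ∧ ∀ s : ℝ≥0, s ≤ ε → ∀ x : X, φ s x ⤳ x := by
  classical
  have hx : ∀ x : X, ∃ ε : ℝ≥0, 0 < ε ∧ ∀ s : ℝ≥0, s ≤ ε → φ s x ⤳ x := by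
    intro x
    have hc : Tendsto (fun s : ℝ≥0 => φ s x) (𝓝 0) (𝓝 x) := by
      have h0 := (h.1.tendsto (0, x))
      simp only [h.2.1 x] at h0
      exact h0.comp ((continuous_id.prodMk continuous_const).tendsto 0)
    have hev : ∀ᶠ s in 𝓝 (0 : ℝ≥0), φ s x ∈ nhdsKer {x} :=
      hc.eventually (isOpen_nhdsKer.eventually_mem (subset_nhdsKer (mem_singleton x)))
    obtain ⟨ε, hε, hball⟩ := NNReal.nhds_zero_basis.eventually_iff.1 hev
    refine ⟨ε / 2, by positivity, fun s hs => ?_⟩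
    have := hball (show s ∈ Iio ε from lt_of_le_of_lt hs (NNReal.half_lt_self hε.ne'))
    rwa [mem_nhdsKer_singleton] at this
  cases isEmpty_or_nonempty X with
  | inl hE => exact ⟨1, one_pos, fun s _ x => (hE.false x).elim⟩
  | inr hne =>
    have : Fintype X := Fintype.ofFinite X
    choose f hf1 hf2 using hx
    refine ⟨Finset.univ.inf' Finset.univ_nonempty f, ?_, fun s hs x => ?_⟩
    · rw [Finset.lt_inf'_iff]; exact fun x _ => hf1 x
    · exact hf2 x s (hs.trans (Finset.inf'_le f (Finset.mem_univ x)))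

lemma semiflow_spec {φ : ℝ≥0 → X → X} (h : IsSemiflow φ) (t : ℝ≥0) (x : X) :
    φ t x ⤳ x := by
  obtain ⟨ε, hε, hspec⟩ := semiflow_eps h
  obtain ⟨n, hn⟩ : ∃ n : ℕ, t ≤ n * ε := by
    obtain ⟨n, hn⟩ := exists_nat_ge (t / ε)
    exact ⟨n, (div_le_iff₀ hε).1 hn⟩
  induction n generalizing t x with
  | zero =>
    have ht : t = 0 := le_antisymm (by simpa using hn) zero_le
    rw [ht, h.2.1]
  | succ n ih =>
    rcases le_or_gt t ε with h1 | h1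
    · exact hspec t h1 x
    · have h2 : t - ε ≤ n * ε := by
        rw [tsub_le_iff_right]
        calc t ≤ (n + 1 : ℕ) * ε := hn
          _ = n * ε + ε := by push_cast; ring
      have heq : φ t x = φ (t - ε) (φ ε x) := by
        rw [h.2.2, tsub_add_cancel_of_le h1.le]
      rw [heq]
      exact (ih (t - ε) (φ ε x) h2).trans (hspec ε le_rfl x)

lemma semiflow_trivial [T0Space X] (hnb : ∀ x : X, ¬ IsDownBeatPoint x)
    {φ : ℝ≥0 → X → X} (h : IsSemiflow φ) : IsTrivialSemiflow φ := by
  have : Fintype X := Fintype.ofFinite X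
  set r : X → X → Prop := fun y x => y ⤳ x ∧ y ≠ x with hr
  have instT : IsTrans X r := ⟨fun a b c hab hbc =>
    ⟨hab.1.trans hbc.1, fun hac => hab.2 ((hab.1.antisymm (hac ▸ hbc.1)).eq)⟩⟩
  have instI : IsIrrefl X r := ⟨fun a ha => ha.2 rfl⟩
  have wf : WellFounded r := Finite.wellFounded_of_trans_of_irrefl r
  suffices H : ∀ x : X, ∀ t : ℝ≥0, φ t x = x from fun t x => H x t
  intro x
  induction x using wf.induction with
  | _ x ih =>
    intro t
    by_contra hne
    refine hnb x ⟨φ t x, ⟨semiflow_spec h t x, hne⟩, fun y hy hyx => ?_⟩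
    have hopen : IsOpen ((fun p : ℝ≥0 × X => φ p.1 p.2) ⁻¹' nhdsKer {φ t x}) :=
      isOpen_nhdsKer.preimage h.1
    have hmem : (t, x) ∈ (fun p : ℝ≥0 × X => φ p.1 p.2) ⁻¹' nhdsKer {φ t x} :=
      subset_nhdsKer (mem_singleton _)
    obtain ⟨u, v, hu, hv, htu, hxv, huv⟩ := isOpen_prod_iff.1 hopen t x hmem
    have hyv : y ∈ v := hy.mem_open hv hxv
    have hmem2 : φ t y ∈ nhdsKer {φ t x} := huv (mk_mem_prod htu hyv)
    rwa [ih y ⟨hy, hyx⟩ t, mem_nhdsKer_singleton] at hmem2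

lemma exists_nontrivial_semiflow {x m : X} (hm : m ⤳ x) (hmx : m ≠ x)
    (hgr : ∀ y : X, y ⤳ x → y ≠ x → y ⤳ m) :
    ∃ φ : ℝ≥0 → X → X, IsSemiflow φ ∧ φ 1 x = m := by
  classical
  refine ⟨fun t y => if t ≠ 0 ∧ y = x then m else y, ⟨?_, ?_, ?_⟩, ?_⟩
  · rw [continuous_def]
    intro U hU
    by_cases hxU : x ∈ U
    · have hmU : m ∈ U := hm.mem_open hU hxU
      have hset : (fun p : ℝ≥0 × X => if p.1 ≠ 0 ∧ p.2 = x then m else p.2) ⁻¹' U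
          = Set.univ ×ˢ U := by
        ext ⟨t, y⟩
        by_cases hc : t ≠ 0 ∧ y = x
        · simp [hc, hmU, hc.2, hxU]
        · simp [hc]
      rw [hset]; exact isOpen_univ.prod hU
    · by_cases hmU : m ∈ U
      · have hset : (fun p : ℝ≥0 × X => if p.1 ≠ 0 ∧ p.2 = x then m else p.2) ⁻¹' U
            = (Set.univ ×ˢ U) ∪ ({t : ℝ≥0 | t ≠ 0} ×ˢ nhdsKer {x}) := by
          ext ⟨t, y⟩
          by_cases hc : t ≠ 0 ∧ y = x
          · simp only [Set.mem_preimage, if_pos hc, Set.mem_union, Set.mem_prod,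
              Set.mem_univ, true_and, Set.mem_setOf_eq]
            refine ⟨fun _ => Or.inr ⟨hc.1, ?_⟩, fun _ => hmU⟩
            rw [hc.2]; exact subset_nhdsKer (mem_singleton x)
          · simp only [Set.mem_preimage, if_neg hc, Set.mem_union, Set.mem_prod,
              Set.mem_univ, true_and, Set.mem_setOf_eq]
            constructor
            · exact fun hy => Or.inl hy
            · rintro (hy | ⟨ht, hy⟩)
              · exact hy
              · rw [mem_nhdsKer_singleton] at hy
                have hyx : y ≠ x := fun hyx => hc ⟨ht, hyx⟩
                exact (hgr y hy hyx).mem_open hU hmU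
        rw [hset]
        exact (isOpen_univ.prod hU).union (isOpen_compl_singleton.prod isOpen_nhdsKer)
      · have hset : (fun p : ℝ≥0 × X => if p.1 ≠ 0 ∧ p.2 = x then m else p.2) ⁻¹' U
            = Set.univ ×ˢ U := by
          ext ⟨t, y⟩
          by_cases hc : t ≠ 0 ∧ y = x
          · simp [hc, hmU, hc.2, hxU]
          · simp [hc]
        rw [hset]; exact isOpen_univ.prod hU
  · intro y; simp
  · intro s t y
    change (if s ≠ 0 ∧ (if t ≠ 0 ∧ y = x then m else y) = x then m
        else if t ≠ 0 ∧ y = x then m else y)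
      = if s + t ≠ 0 ∧ y = x then m else y
    by_cases ht : t = 0
    · rw [ht, add_zero,
        if_neg (show ¬((0 : ℝ≥0) ≠ 0 ∧ y = x) from fun h => h.1 rfl)]
    · have hst : s + t ≠ 0 :=
        (lt_of_lt_of_le (pos_iff_ne_zero.2 ht) le_add_self).ne'
      by_cases hy : y = x
      · rw [hy, if_pos (show t ≠ 0 ∧ x = x from ⟨ht, rfl⟩),
          if_pos (show s + t ≠ 0 ∧ x = x from ⟨hst, rfl⟩),
          if_neg (show ¬(s ≠ 0 ∧ m = x) from fun h => hmx h.2)]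
      · rw [if_neg (show ¬(t ≠ 0 ∧ y = x) from fun h => hy h.2),
          if_neg (show ¬(s ≠ 0 ∧ y = x) from fun h => hy h.2),
          if_neg (show ¬(s + t ≠ 0 ∧ y = x) from fun h => hy h.2)]
  · exact if_pos ⟨one_ne_zero, rfl⟩

end Aux

/-- A finite `T₀`-space has no down beat points if and only if the trivial
semiflow is the unique semiflow on it, i.e. `S_F(X) = 1`. -/


theorem no_downBeatPoint_iff_unique_semiflow {X : Type*} [TopologicalSpace X] [Finite X]
    [T0Space X] :
    (∀ x : X, ¬ IsDownBeatPoint x) ↔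
      Nat.card {φ : ℝ≥0 → X → X // IsSemiflow φ} = 1 := by
  have htriv : IsSemiflow (fun (_ : ℝ≥0) (x : X) => x) :=
    ⟨continuous_snd, fun _ => rfl, fun _ _ _ => rfl⟩
  rw [Nat.card_eq_one_iff_unique]
  constructor
  · intro hnb
    refine ⟨⟨fun φ ψ => ?_⟩, ⟨⟨_, htriv⟩⟩⟩
    have h1 := semiflow_trivial hnb φ.2
    have h2 := semiflow_trivial hnb ψ.2
    apply Subtype.ext
    funext t x
    rw [h1 t x, h2 t x]
  · rintro ⟨hsub, -⟩ x ⟨m, ⟨hm, hmx⟩, hgr⟩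
    obtain ⟨φ, hφ, hφ1⟩ := exists_nontrivial_semiflow hm hmx hgr
    have heq : (⟨φ, hφ⟩ : {φ : ℝ≥0 → X → X // IsSemiflow φ})
        = ⟨fun _ x => x, htriv⟩ := hsub.elim _ _
    have : φ 1 x = x := by
      have := congrFun (congrFun (congrArg Subtype.val heq) 1) x
      simpa using this
    exact hmx (hφ1 ▸ this)
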